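/- Let M be an R-module and let F = R/m be the residue field of R, regarded as an R-module. Then for every n ≥ 2 there is an isomorphism Tor_{n+2}^R(M, F) ≅ Tor_n^R(M, F). -/

import Mathlib

open Polynomial CategoryTheory

noncomputable section

/-- The field `F = ℤ/2ℤ`. -/
abbrev Fld := ZMod 2

/-- The polynomial ring `F[[V]][Q]` (polynomials in `Q` over the power series ring `F[[V]]`). -/
abbrev Rpoly := Polynomial (PowerSeries Fld)

/-- The ring `R = F[[V]][Q]/(Q³)`. -/
abbrev Rring := Rpoly ⧸ Ideal.span ({(X : Rpoly) ^ 3} : Set Rpoly)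

instance Rring.instCommRing : CommRing Rring := Ideal.Quotient.commRing _

/-- `Q`, the image in `R` of the polynomial variable. -/
def Qe : Rring := Ideal.Quotient.mk (Ideal.span ({(X : Rpoly) ^ 3} : Set Rpoly)) (X : Rpoly)

/-- `V`, the image in `R` of the power series variable. -/
def Ve : Rring := Ideal.Quotient.mk (Ideal.span ({(X : Rpoly) ^ 3} : Set Rpoly)) (C PowerSeries.X)
/-- The maximal ideal `m = (Q, V)` of `R`. -/
def mIdeal : Ideal Rring := Ideal.span {Qe, Ve}

/-- The residue field `F = R/m`, regarded as an `R`-module. -/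
def resF : ModuleCat Rring := ModuleCat.of Rring (Rring ⧸ mIdeal)

open MonoidalCategory

set_option maxHeartbeats 1000000
set_option synthInstance.maxHeartbeats 400000

abbrev S := PowerSeries Fld

/-- inclusion of coefficients -/
def cS : S →+* Rring :=
  (Ideal.Quotient.mk (Ideal.span ({(X : Rpoly) ^ 3} : Set Rpoly))).comp
    (Polynomial.C : S →+* Rpoly)

lemma Ve_eq : Ve = cS PowerSeries.X := rfl

lemma Qe_cube : Qe ^ 3 = 0 := by
  have : Qe ^ 3 = Ideal.Quotient.mk _ ((X : Rpoly) ^ 3) := by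
    simp [Qe, map_pow]
  rw [this, Ideal.Quotient.eq_zero_iff_mem]
  exact Ideal.subset_span (Set.mem_singleton _)

lemma rep (x : Rring) : ∃ a b c : S, x = cS a + cS b * Qe + cS c * Qe ^ 2 := by
  obtain ⟨p, rfl⟩ := Ideal.Quotient.mk_surjective x
  have hm : ((X : Rpoly) ^ 3).Monic := monic_X_pow 3
  set r := p %ₘ ((X : Rpoly) ^ 3) with hr
  have hdeg : r.degree < 3 := by
    simpa using degree_modByMonic_lt p hm
  have hmk : Ideal.Quotient.mk (Ideal.span ({(X : Rpoly) ^ 3} : Set Rpoly)) p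
      = Ideal.Quotient.mk _ r := by
    have h := modByMonic_add_div p ((X : Rpoly) ^ 3)
    rw [← h, map_add, map_mul]
    have : Ideal.Quotient.mk (Ideal.span ({(X : Rpoly) ^ 3} : Set Rpoly)) ((X : Rpoly) ^ 3) = 0 :=
      Ideal.Quotient.eq_zero_iff_mem.2 (Ideal.subset_span (Set.mem_singleton _))
    rw [this, zero_mul, add_zero]
  refine ⟨r.coeff 0, r.coeff 1, r.coeff 2, ?_⟩
  rw [hmk]
  have hrexp : r = C (r.coeff 0) + C (r.coeff 1) * X + C (r.coeff 2) * X ^ 2 := by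
    ext n
    match n with
    | 0 => simp
    | 1 => simp
    | 2 => simp
    | (n+3) =>
      have : r.coeff (n+3) = 0 := coeff_eq_zero_of_degree_lt (lt_of_lt_of_le hdeg (by
        exact_mod_cast Nat.le_add_left 3 n))
      simp [this, coeff_X_pow]
  conv_lhs => rw [hrexp]
  simp [cS, Qe, map_add, map_mul, map_pow]

lemma indep {a b c : S} (h : cS a + cS b * Qe + cS c * Qe ^ 2 = 0) :
    a = 0 ∧ b = 0 ∧ c = 0 := by
  have h' : Ideal.Quotient.mk (Ideal.span ({(X : Rpoly) ^ 3} : Set Rpoly))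
      (C a + C b * X + C c * X ^ 2) = 0 := by
    rw [map_add, map_add, map_mul, map_mul, map_pow]; exact h
  rw [Ideal.Quotient.eq_zero_iff_mem, Ideal.mem_span_singleton] at h'
  obtain ⟨q, hq⟩ := h'
  rw [show (X:Rpoly)^3 * q = q * X^3 from mul_comm _ _] at hq
  have h0 := congrArg (fun p => Polynomial.coeff p 0) hq
  have h1 := congrArg (fun p => Polynomial.coeff p 1) hq
  have h2 := congrArg (fun p => Polynomial.coeff p 2) hq
  simp [coeff_mul_X_pow', coeff_X_pow, coeff_C] at h0 h1 h2
  exact ⟨h0, h1, h2⟩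

lemma sol1 {a b : Rring} (h : Qe * a + Ve * b = 0) :
    ∃ x y : Rring, Qe ^ 2 * x + Ve * y = a ∧ -(Qe * y) = b := by
  obtain ⟨a0, a1, a2, rfl⟩ := rep a
  obtain ⟨b0, b1, b2, rfl⟩ := rep b
  rw [Ve_eq] at h
  obtain ⟨h0, h1, h2⟩ := indep (a := PowerSeries.X * b0) (b := a0 + PowerSeries.X * b1)
    (c := a1 + PowerSeries.X * b2) (by
      simp only [map_add, map_mul]
      linear_combination h - cS a2 * Qe_cube)
  have hb0 : b0 = 0 := by
    rcases mul_eq_zero.1 h0 with h' | h'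
    · exact absurd h' PowerSeries.X_ne_zero
    · exact h'
  have ha0 : a0 = -(PowerSeries.X * b1) := by linear_combination h1
  have ha1 : a1 = -(PowerSeries.X * b2) := by linear_combination h2
  refine ⟨cS a2, -(cS b1 + cS b2 * Qe), ?_, ?_⟩
  · rw [ha0, ha1, Ve_eq]
    simp only [map_neg, map_mul]
    ring
  · rw [hb0]
    simp only [map_zero]
    ring

lemma sol2 {a b : Rring} (h : Qe ^ 2 * a + Ve * b = 0) (h' : -(Qe * b) = 0) :
    ∃ x y : Rring, Qe * x + Ve * y = a ∧ -(Qe ^ 2 * y) = b := by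
  obtain ⟨a0, a1, a2, rfl⟩ := rep a
  obtain ⟨b0, b1, b2, rfl⟩ := rep b
  rw [Ve_eq] at h
  obtain ⟨-, hb0, hb1⟩ := indep (a := 0) (b := b0) (c := b1) (by
    simp only [map_zero]
    linear_combination -h' - cS b2 * Qe_cube)
  obtain ⟨-, -, h2⟩ := indep (a := PowerSeries.X * b0) (b := PowerSeries.X * b1)
    (c := a0 + PowerSeries.X * b2) (by
      simp only [map_add, map_mul]
      linear_combination h - (cS a1 + cS a2 * Qe) * Qe_cube)
  have ha0 : a0 = -(PowerSeries.X * b2) := by linear_combination h2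
  refine ⟨cS a1 + cS a2 * Qe, -(cS b2), ?_, ?_⟩
  · rw [ha0, Ve_eq]
    simp only [map_neg, map_mul]
    ring
  · rw [hb0, hb1]
    simp only [map_zero]
    ring

abbrev R1 : ModuleCat Rring := ModuleCat.of Rring Rring
abbrev R2 : ModuleCat Rring := ModuleCat.of Rring (Rring × Rring)

/-- the map `(x, y) ↦ Qx + Vy`. -/
def mulQV : (Rring × Rring) →ₗ[Rring] Rring where
  toFun z := Qe * z.1 + Ve * z.2
  map_add' := by intro z w; simp only [Prod.fst_add, Prod.snd_add]; ring
  map_smul' := by intro s z; simp only [Prod.smul_fst, Prod.smul_snd, smul_eq_mul,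
    RingHom.id_apply]; ring

/-- the map `(x, y) ↦ (px + Vy, -qy)`. -/
def mat (p q : Rring) : (Rring × Rring) →ₗ[Rring] (Rring × Rring) where
  toFun z := (p * z.1 + Ve * z.2, -(q * z.2))
  map_add' := by
    intro z w
    simp only [Prod.fst_add, Prod.snd_add, Prod.mk_add_mk, Prod.mk.injEq]
    constructor <;> ring
  map_smul' := by
    intro s z
    simp only [Prod.smul_fst, Prod.smul_snd, smul_eq_mul, RingHom.id_apply, Prod.smul_mk,
      Prod.mk.injEq]
    constructor <;> ring

def Xf : ℕ → ModuleCat Rring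
  | 0 => R1
  | _+1 => R2

def dk : ∀ n : ℕ, Xf (n+1) ⟶ Xf n
  | 0 => ModuleCat.ofHom mulQV
  | n+1 => ModuleCat.ofHom (if n % 2 = 0 then mat (Qe^2) Qe else mat Qe (Qe^2))

lemma dk_zero : dk 0 = ModuleCat.ofHom mulQV := rfl
lemma dk_succ (n : ℕ) :
    dk (n+1) = ModuleCat.ofHom (if n % 2 = 0 then mat (Qe^2) Qe else mat Qe (Qe^2)) := rfl

lemma comp_M2_mul (z : Rring × Rring) : mulQV (mat (Qe^2) Qe z) = 0 := by
  simp only [mat, mulQV, LinearMap.coe_mk, AddHom.coe_mk]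
  linear_combination z.1 * Qe_cube

lemma comp_M1_M2 (z : Rring × Rring) : mat (Qe^2) Qe (mat Qe (Qe^2) z) = 0 := by
  simp only [mat, LinearMap.coe_mk, AddHom.coe_mk, Prod.mk_eq_zero]
  constructor
  · linear_combination z.1 * Qe_cube
  · linear_combination z.2 * Qe_cube

lemma comp_M2_M1 (z : Rring × Rring) : mat Qe (Qe^2) (mat (Qe^2) Qe z) = 0 := by
  simp only [mat, LinearMap.coe_mk, AddHom.coe_mk, Prod.mk_eq_zero]
  constructor
  · linear_combination z.1 * Qe_cube
  · linear_combination z.2 * Qe_cube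

lemma sqd : ∀ n : ℕ, dk (n+1) ≫ dk n = 0 := by
  intro n
  cases n with
  | zero =>
    rw [dk_succ, dk_zero]
    norm_num
    apply ModuleCat.hom_ext
    apply LinearMap.ext
    intro z
    exact comp_M2_mul z
  | succ n =>
    rcases Nat.even_or_odd n with he | ho
    · have h1 : n % 2 = 0 := Nat.even_iff.mp he
      have h2 : (n+1) % 2 = 1 := by omega
      rw [dk_succ, dk_succ, h1, h2]
      norm_num
      apply ModuleCat.hom_ext
      apply LinearMap.ext
      intro z
      exact comp_M1_M2 z
    · have h1 : n % 2 = 1 := Nat.odd_iff.mp ho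
      have h2 : (n+1) % 2 = 0 := by omega
      rw [dk_succ, dk_succ, h1, h2]
      norm_num
      apply ModuleCat.hom_ext
      apply LinearMap.ext
      intro z
      exact comp_M2_M1 z

def Pcomplex : ChainComplex (ModuleCat Rring) ℕ := ChainComplex.of Xf dk sqd

lemma Pcomplex_exactAt_succ (n : ℕ) : Pcomplex.ExactAt (n + 1) := by
  rw [HomologicalComplex.exactAt_iff' _ (n + 2) (n + 1) n (by simp) (by simp)]
  rw [ShortComplex.moduleCat_exact_iff]
  intro z hz
  dsimp [Pcomplex, HomologicalComplex.sc', HomologicalComplex.shortComplexFunctor'] at z hz ⊢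
  rw [ChainComplex.of_d] at hz
  have hd : (ChainComplex.of Xf dk sqd).d (n+2) (n+1) = dk (n+1) := ChainComplex.of_d Xf dk (n+1)
  erw [ChainComplex.of_d]
  cases n with
  | zero =>
    rw [dk_zero] at hz
    rw [dk_succ]
    have hz' : Qe * z.1 + Ve * z.2 = 0 := hz
    obtain ⟨x, y, h1, h2⟩ := sol1 hz'
    exact ⟨(x, y), by norm_num [mat]; exact Prod.ext h1 h2⟩
  | succ m =>
    rw [dk_succ] at hz
    rw [dk_succ]
    rcases Nat.even_or_odd m with he | ho
    · have h1 : m % 2 = 0 := Nat.even_iff.mp he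
      have h2 : (m + 1) % 2 = 1 := by omega
      rw [h1] at hz
      rw [h2]
      norm_num at hz ⊢
      have e1 : Qe ^ 2 * z.1 + Ve * z.2 = 0 := congrArg Prod.fst hz
      have e2 : -(Qe * z.2) = 0 := congrArg Prod.snd hz
      obtain ⟨x, y, hx, hy⟩ := sol2 e1 e2
      exact ⟨(x, y), Prod.ext hx hy⟩
    · have h1 : m % 2 = 1 := Nat.odd_iff.mp ho
      have h2 : (m + 1) % 2 = 0 := by omega
      rw [h1] at hz
      rw [h2]
      norm_num at hz ⊢
      have e1 : Qe * z.1 + Ve * z.2 = 0 := congrArg Prod.fst hz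
      obtain ⟨x, y, hx, hy⟩ := sol1 e1
      exact ⟨(x, y), Prod.ext hx hy⟩

def πmap : Xf 0 ⟶ resF := ModuleCat.ofHom (Submodule.mkQ mIdeal)

lemma d_π : dk 0 ≫ πmap = 0 := by
  apply ModuleCat.hom_ext
  apply LinearMap.ext
  intro z
  show Submodule.mkQ mIdeal (mulQV z) = 0
  rw [Submodule.mkQ_apply, Submodule.Quotient.mk_eq_zero]
  have : Qe * z.1 + Ve * z.2 ∈ mIdeal := by
    rw [mIdeal, Ideal.mem_span_pair]
    exact ⟨z.1, z.2, by ring⟩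
  exact this

instance Xf_projective (n : ℕ) : Projective (Xf n) := by
  cases n with
  | zero => exact ModuleCat.projective_of_free (Module.Basis.singleton PUnit.{1} Rring)
  | succ m => exact ModuleCat.projective_of_free (R := Rring) ((Module.Basis.singleton PUnit.{1} Rring).prod (Module.Basis.singleton PUnit.{1} Rring))

def Pres : ProjectiveResolution resF where
  complex := Pcomplex
  projective n := by
    cases n with
    | zero => exact Xf_projective 0
    | succ m => exact Xf_projective (m+1)
  π := (ChainComplex.toSingle₀Equiv _ _).symm ⟨πmap, by
    rw [show Pcomplex.d 1 0 = dk 0 from ChainComplex.of_d Xf dk 0]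
    exact d_π⟩
  quasiIso := ⟨fun n => by
    cases n with
    | zero =>
      rw [ChainComplex.quasiIsoAt₀_iff, ShortComplex.quasiIso_iff_of_zeros']
      · constructor
        · rw [ShortComplex.moduleCat_exact_iff]
          intro x hx
          dsimp [HomologicalComplex.shortComplexFunctor'] at x hx ⊢
          have hd : Pcomplex.d 1 0 = dk 0 := ChainComplex.of_d Xf dk 0
          change ∃ x₁, (ConcreteCategory.hom (dk 0)) x₁ = x
          change (ConcreteCategory.hom πmap) x = 0 at hx
          have hx' : Submodule.mkQ mIdeal (show Rring from x) = 0 := hx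
          rw [Submodule.mkQ_apply, Submodule.Quotient.mk_eq_zero] at hx'
          rw [mIdeal, Ideal.mem_span_pair] at hx'
          obtain ⟨u, v, huv⟩ := hx'
          refine ⟨(u, v), ?_⟩
          show Qe * u + Ve * v = (show Rring from x)
          linear_combination huv
        · have hτ : ((HomologicalComplex.shortComplexFunctor' (ModuleCat Rring) (ComplexShape.down ℕ) 1 0 0).map
              ((ChainComplex.toSingle₀Equiv Pcomplex resF).symm ⟨πmap, by
                rw [show Pcomplex.d 1 0 = dk 0 from ChainComplex.of_d Xf dk 0]; exact d_π⟩)).τ₂ = πmap := by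
            dsimp [HomologicalComplex.shortComplexFunctor']
            rfl
          rw [hτ]
          exact (ModuleCat.epi_iff_surjective _).2 (Submodule.mkQ_surjective mIdeal)
      all_goals rfl
    | succ n =>
      rw [quasiIsoAt_iff_exactAt']
      · apply Pcomplex_exactAt_succ
      · apply ChainComplex.exactAt_succ_single_obj⟩

lemma dk_per (j : ℕ) : dk (j+3) = dk (j+1) := by
  rw [dk_succ (j+2), dk_succ j, Nat.add_mod_right]


/-- For every `R`-module `M` and every `n ≥ 2`,
`Tor_{n+2}^R(M, F) ≅ Tor_n^R(M, F)`. -/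
theorem stmt9 (M : Type) [AddCommGroup M] [Module Rring M] :
    ∀ n : ℕ, 2 ≤ n →
      Nonempty ((((Tor (ModuleCat Rring) (n + 2)).obj (ModuleCat.of Rring M)).obj resF) ≅
        (((Tor (ModuleCat Rring) n).obj (ModuleCat.of Rring M)).obj resF)) := by
  intro n hn
  obtain ⟨m, rfl⟩ : ∃ m, n = m + 2 := ⟨n - 2, by omega⟩
  let M' := ModuleCat.of Rring M
  let F := (tensoringLeft (ModuleCat Rring)).obj M'
  let K := (F.mapHomologicalComplex (ComplexShape.down ℕ)).obj Pcomplex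
  have e1 : Pcomplex.d (m+5) (m+4) = Pcomplex.d (m+3) (m+2) := by
    have a : Pcomplex.d (m+5) (m+4) = dk (m+4) := ChainComplex.of_d Xf dk (m+4)
    have b : Pcomplex.d (m+3) (m+2) = dk (m+2) := ChainComplex.of_d Xf dk (m+2)
    rw [a, b]
    exact dk_per (m+1)
  have e2 : Pcomplex.d (m+4) (m+3) = Pcomplex.d (m+2) (m+1) := by
    have a : Pcomplex.d (m+4) (m+3) = dk (m+3) := ChainComplex.of_d Xf dk (m+3)
    have b : Pcomplex.d (m+2) (m+1) = dk (m+1) := ChainComplex.of_d Xf dk (m+1)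
    rw [a, b]
    exact dk_per m
  let e : K.sc' (m+5) (m+4) (m+3) ≅ K.sc' (m+3) (m+2) (m+1) :=
    ShortComplex.isoMk (Iso.refl _) (Iso.refl _) (Iso.refl _)
      (by dsimp [K]; erw [Category.id_comp, Category.comp_id]; exact congrArg F.map e1.symm) (by dsimp [K]; erw [Category.id_comp, Category.comp_id]; exact congrArg F.map e2.symm)
  let mid : K.homology (m+4) ≅ K.homology (m+2) :=
    (HomologicalComplex.homologyIsoSc' K (m+5) (m+4) (m+3) (by simp) (by simp)) ≪≫
      ShortComplex.homologyMapIso e ≪≫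
      (HomologicalComplex.homologyIsoSc' K (m+3) (m+2) (m+1) (by simp) (by simp)).symm
  exact ⟨(Pres.isoLeftDerivedObj F (m+4)) ≪≫ mid ≪≫ (Pres.isoLeftDerivedObj F (m+2)).symm⟩
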